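/- For every z ∈ ℂ^n with z ≠ 0, let H_z = {w ∈ ℂ^n : Σ_{j=1}^{n} z_j w_j = 0}. Then the ω-symplectic orthogonal complement of H_z equals the complex line spanned by the coordinatewise conjugate vector conj(z): {u ∈ ℂ^n : ω(u,w) = 0 for all w ∈ H_z} = {c · conj(z) : c ∈ ℂ}. This identifies the horizontal distribution defining symplectic parallel transport in the model Lefschetz fibration. -/

import Mathlib

open scoped BigOperators

noncomputable section

/-- The standard symplectic form on `ℂⁿ`: `ω(u,v) = Σ_j Im(conj(u_j) · v_j)`. -/
def omegaC (n : ℕ) (u v : EuclideanSpace ℂ (Fin n)) : ℝ :=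
  ∑ j : Fin n, ((starRingEnd ℂ) (u j) * v j).im

/-- `H_z = ker(dq_z) = {w : Σ_j z_j w_j = 0}`. -/
def Hker (n : ℕ) (z : EuclideanSpace ℂ (Fin n)) : Set (EuclideanSpace ℂ (Fin n)) :=
  {w | ∑ j : Fin n, z j * w j = 0}

/-- The coordinatewise complex conjugate of `z ∈ ℂⁿ`. -/
def conjVec (n : ℕ) (z : EuclideanSpace ℂ (Fin n)) : EuclideanSpace ℂ (Fin n) :=
  WithLp.toLp 2 (fun j => (starRingEnd ℂ) (z j))

lemma omega_eq_inner (n : ℕ) (u w : EuclideanSpace ℂ (Fin n)) :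
    omegaC n u w = (inner ℂ u w : ℂ).im := by
  simp [omegaC, PiLp.inner_apply, Complex.im_sum, RCLike.inner_apply]
  exact Finset.sum_congr rfl (fun x _ => by ring)

/-- For `z ≠ 0`, the `ω`-symplectic orthogonal complement of `H_z` is the complex line
spanned by `conj(z)`: the horizontal distribution of the model Lefschetz fibration. -/
theorem stmt_14 (n : ℕ) (hn : 1 ≤ n) (z : EuclideanSpace ℂ (Fin n)) (hz : z ≠ 0) :
    {u : EuclideanSpace ℂ (Fin n) | ∀ w ∈ Hker n z, omegaC n u w = 0} =
      Set.range (fun c : ℂ => c • conjVec n z) := by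
  classical
  set v : EuclideanSpace ℂ (Fin n) := conjVec n z with hv
  have hinner : ∀ w : EuclideanSpace ℂ (Fin n),
      ∑ j : Fin n, z j * w j = (inner ℂ v w : ℂ) := by
    intro w
    simp [PiLp.inner_apply, RCLike.inner_apply, hv, conjVec, mul_comm]
  have hH : Hker n z = (((ℂ ∙ v)ᗮ : Submodule ℂ _) : Set _) := by
    ext w
    rw [SetLike.mem_coe, Submodule.mem_orthogonal_singleton_iff_inner_right]
    simp [Hker, hinner]
  rw [hH]
  ext u
  constructor
  · intro h
    have hu : u ∈ ((ℂ ∙ v)ᗮ)ᗮ := by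
      intro w hw
      have h1 : (inner ℂ u w : ℂ).im = 0 := by
        rw [← omega_eq_inner]; exact h w hw
      have h2 : (inner ℂ u w : ℂ).re = 0 := by
        have hw' : Complex.I • w ∈ (ℂ ∙ v)ᗮ := Submodule.smul_mem _ _ hw
        have := h _ hw'
        rw [omega_eq_inner, inner_smul_right] at this
        simpa [Complex.ext_iff] using this
      have : (inner ℂ u w : ℂ) = 0 := Complex.ext h2 h1
      rw [← inner_conj_symm, this, map_zero]
    rw [Submodule.orthogonal_orthogonal] at hu
    rcases Submodule.mem_span_singleton.mp hu with ⟨c, hc⟩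
    exact ⟨c, hc⟩
  · rintro ⟨c, rfl⟩ w hw
    rw [omega_eq_inner, inner_smul_left]
    have hvw : (inner ℂ v w : ℂ) = 0 :=
      Submodule.mem_orthogonal_singleton_iff_inner_right.mp hw
    rw [hvw, mul_zero, Complex.zero_im]
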